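/- Let R be a ring, I an ideal, and ν a function from nonzero ideals of R to ℕ satisfying ν(JK) = ν(J) + ν(K) and ν(J+K) = min{ν(J), ν(K)} for all nonzero ideals J, K. Suppose the symbolic Rees algebra of I is generated in degrees at most n, so that for every s ≥ 1, I^{(s)} = Σ_{y_1 + 2y_2 + ... + n y_n = s} I^{y_1}(I^{(2)})^{y_2}⋯(I^{(n)})^{y_n} over non-negative integers y_i. Then the limit lim_{s→∞} ν(I^{(s)})/s exists and equals min_{1 ≤ m ≤ n} ν(I^{(m)})/m. -/

import Mathlib

section Aux

variable {R : Type*} [CommRing R] [Nontrivial R]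
    (ν : Ideal R → ℕ)
    (hmul : ∀ J K : Ideal R, J ≠ ⊥ → K ≠ ⊥ → ν (J * K) = ν J + ν K)
    (hadd : ∀ J K : Ideal R, J ≠ ⊥ → K ≠ ⊥ → ν (J + K) = min (ν J) (ν K))

include hmul in
lemma nu_top12 : ν (⊤ : Ideal R) = 0 := by
  have h := hmul ⊤ ⊤ bot_lt_top.ne' bot_lt_top.ne'
  rw [Ideal.mul_top] at h
  omega

include hadd in
lemma nu_anti12 {A B : Ideal R} (hAB : A ≤ B) (hA : A ≠ ⊥) : ν B ≤ ν A := by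
  have hB : B ≠ ⊥ := fun h => hA (le_bot_iff.mp (h ▸ hAB))
  have h := hadd A B hA hB
  rw [Submodule.add_eq_sup, sup_eq_right.mpr hAB] at h
  omega

include hmul in
lemma nu_pow12 {J : Ideal R} {k : ℕ} (h : J ^ k ≠ ⊥) : ν (J ^ k) = k * ν J := by
  induction k with
  | zero => simpa using nu_top12 ν hmul
  | succ k ih =>
    have hJ : J ≠ ⊥ := by
      rintro rfl; exact h (by simp [zero_pow, pow_succ, Ideal.mul_bot])
    have hk : J ^ k ≠ ⊥ := by
      rintro hk; exact h (by rw [pow_succ, hk, Ideal.bot_mul])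
    rw [pow_succ, hmul _ _ hk hJ, ih hk]; ring

include hmul in
lemma nu_prod12 {ι : Type*} (t : Finset ι) (B : ι → Ideal R)
    (h : (∏ i ∈ t, B i) ≠ ⊥) : ν (∏ i ∈ t, B i) = ∑ i ∈ t, ν (B i) := by
  classical
  induction t using Finset.induction_on with
  | empty => simpa using nu_top12 ν hmul
  | insert a t ha ih =>
    rw [Finset.prod_insert ha] at h ⊢
    have hBa : B a ≠ ⊥ := by rintro hb; exact h (by rw [hb, Ideal.bot_mul])
    have ht : (∏ i ∈ t, B i) ≠ ⊥ := by rintro hb; exact h (by rw [hb, Ideal.mul_bot])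
    rw [hmul _ _ hBa ht, ih ht, Finset.sum_insert ha]

include hadd in
lemma nu_sup12 {ι : Type*} (t : Finset ι) (B : ι → Ideal R) (r : ℝ)
    (hne : t.sup B ≠ ⊥) (hb : ∀ i ∈ t, B i ≠ ⊥ → r ≤ (ν (B i) : ℝ)) :
    r ≤ (ν (t.sup B) : ℝ) := by
  classical
  induction t using Finset.induction_on with
  | empty => simp at hne
  | insert a t ha ih =>
    rw [Finset.sup_insert] at hne ⊢
    by_cases hBa : B a = ⊥
    · rw [hBa, bot_sup_eq] at hne ⊢
      exact ih hne (fun i hi => hb i (Finset.mem_insert_of_mem hi))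
    · by_cases ht : t.sup B = ⊥
      · rw [ht, sup_bot_eq] at hne ⊢
        exact hb a (Finset.mem_insert_self a t) hBa
      · have h := hadd (B a) (t.sup B) hBa ht
        rw [Submodule.add_eq_sup] at h
        rw [h]
        push_cast [Nat.cast_min]
        exact le_min (hb a (Finset.mem_insert_self a t) hBa)
          (ih ht (fun i hi => hb i (Finset.mem_insert_of_mem hi)))

include hmul in
lemma nu_botmul12 {P Q C : Ideal R} (hPQ : P * Q = ⊥) (hP : P ≠ ⊥) (hQ : Q ≠ ⊥)
    (hC : C ≠ ⊥) : ν C ≤ ν P + ν Q := by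
  have h1 := hmul P Q hP hQ
  rw [hPQ] at h1
  by_cases hQC : Q * C = ⊥
  · have h2 := hmul Q C hQ hC
    rw [hQC] at h2
    omega
  · have h3 : P * (Q * C) = ⊥ := by rw [← mul_assoc, hPQ, Ideal.bot_mul]
    have h4 := hmul P (Q * C) hP hQC
    rw [h3, hmul Q C hQ hC] at h4
    omega

end Aux

/-- If the symbolic powers of `I` decompose according to a symbolic Rees algebra
generated in degrees at most `n`, and `ν` is multiplicative and min-additive on nonzero
ideals, then `lim ν(I^{(s)})/s` exists and equals `min_{1 ≤ m ≤ n} ν(I^{(m)})/m`. -/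
theorem stmt12 {R : Type*} [CommRing R] [Nontrivial R]
    (Isymb : ℕ → Ideal R) (n : ℕ) (hn : 1 ≤ n)
    (hne : ∀ m : ℕ, 1 ≤ m → Isymb m ≠ ⊥)
    (ν : Ideal R → ℕ)
    (hmul : ∀ J K : Ideal R, J ≠ ⊥ → K ≠ ⊥ → ν (J * K) = ν J + ν K)
    (hadd : ∀ J K : Ideal R, J ≠ ⊥ → K ≠ ⊥ → ν (J + K) = min (ν J) (ν K))
    (hgen : ∀ s : ℕ, 1 ≤ s →
      Isymb s = ⨆ y : {y : Fin n → ℕ // ∑ i : Fin n, ((i : ℕ) + 1) * y i = s},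
        ∏ i : Fin n, (Isymb ((i : ℕ) + 1)) ^ (y.1 i)) :
    Filter.Tendsto (fun s : ℕ => (ν (Isymb s) : ℝ) / s) Filter.atTop
      (nhds ((Finset.Icc 1 n).inf'
        (by exact Finset.nonempty_Icc.mpr hn)
        (fun m => (ν (Isymb m) : ℝ) / m))) := by
  set u : ℕ → ℝ := fun s => (ν (Isymb s) : ℝ) with hu
  set c : ℝ := (Finset.Icc 1 n).inf' (Finset.nonempty_Icc.mpr hn)
      (fun m => (ν (Isymb m) : ℝ) / m) with hc
  -- the index type is finite
  have hfin : ∀ s : ℕ,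
      Finite {y : Fin n → ℕ // ∑ i : Fin n, ((i : ℕ) + 1) * y i = s} := by
    intro s
    have : ∀ (y : {y : Fin n → ℕ // ∑ i : Fin n, ((i : ℕ) + 1) * y i = s})
        (i : Fin n), y.1 i < s + 1 := by
      intro y i
      have h1 : ((i : ℕ) + 1) * y.1 i ≤ s := by
        have h0 := Finset.single_le_sum (f := fun i : Fin n => ((i : ℕ) + 1) * y.1 i)
          (fun j _ => Nat.zero_le _) (Finset.mem_univ i)
        rw [y.2] at h0
        exact h0
      have : y.1 i ≤ ((i : ℕ) + 1) * y.1 i := Nat.le_mul_of_pos_left _ (Nat.succ_pos _)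
      omega
    exact Finite.of_injective (fun y => (fun i => (⟨y.1 i, this y i⟩ : Fin (s + 1))))
      (by
        intro y z hyz
        ext i
        have := congrFun hyz i
        simpa using congrArg Fin.val this)
  -- containment: Isymb s * Isymb t ≤ Isymb (s + t)
  have hcont : ∀ s t : ℕ, 1 ≤ s → 1 ≤ t → Isymb s * Isymb t ≤ Isymb (s + t) := by
    intro s t hs ht
    rw [hgen s hs, hgen t ht, hgen (s + t) (by omega)]
    rw [Submodule.iSup_mul]
    refine iSup_le fun y => ?_
    rw [Submodule.mul_iSup]
    refine iSup_le fun z => ?_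
    have hprod : (∏ i : Fin n, Isymb ((i : ℕ) + 1) ^ y.1 i) *
        (∏ i : Fin n, Isymb ((i : ℕ) + 1) ^ z.1 i) =
        ∏ i : Fin n, Isymb ((i : ℕ) + 1) ^ (y.1 i + z.1 i) := by
      rw [← Finset.prod_mul_distrib]
      exact Finset.prod_congr rfl fun i _ => (pow_add _ _ _).symm
    rw [hprod]
    exact le_iSup_of_le ⟨fun i => y.1 i + z.1 i, by
      simp only [Nat.mul_add, Finset.sum_add_distrib, y.2, z.2]⟩ le_rfl
  -- subadditivity
  have hsub : Subadditive u := by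
    intro s t
    rcases Nat.eq_zero_or_pos s with rfl | hs
    · have h0 : (0:ℝ) ≤ u 0 := Nat.cast_nonneg _
      rw [Nat.zero_add]
      exact le_add_of_nonneg_left h0
    rcases Nat.eq_zero_or_pos t with rfl | ht
    · have h0 : (0:ℝ) ≤ u 0 := Nat.cast_nonneg _
      rw [Nat.add_zero]
      exact le_add_of_nonneg_right h0
    have hP := hne s hs
    have hQ := hne t ht
    have h1 := hmul (Isymb s) (Isymb t) hP hQ
    by_cases hb : Isymb s * Isymb t = ⊥
    · have := nu_botmul12 ν hmul hb hP hQ (hne (s + t) (by omega))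
      simp only [hu]
      push_cast
      exact_mod_cast by exact_mod_cast (Nat.cast_le (α := ℝ)).mpr this
    · have h2 := nu_anti12 ν hadd (hcont s t hs ht) hb
      rw [h1] at h2
      simp only [hu]
      exact_mod_cast h2
  -- lower bound : c * s ≤ u s for s ≥ 1
  have hcle : ∀ i : Fin n, c ≤ (ν (Isymb ((i : ℕ) + 1)) : ℝ) / ((i : ℕ) + 1) := by
    intro i
    rw [hc]
    have hmem : (i : ℕ) + 1 ∈ Finset.Icc 1 n :=
      Finset.mem_Icc.mpr ⟨by omega, Nat.succ_le_of_lt i.2⟩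
    have h := Finset.inf'_le (fun m => (ν (Isymb m) : ℝ) / m) hmem
    simpa only [Nat.cast_add, Nat.cast_one] using h
  have hlow : ∀ s : ℕ, 1 ≤ s → c * s ≤ u s := by
    intro s hs
    have := hfin s
    have : Fintype {y : Fin n → ℕ // ∑ i : Fin n, ((i : ℕ) + 1) * y i = s} :=
      Fintype.ofFinite _
    simp only [hu]
    rw [hgen s hs, ← Finset.sup_univ_eq_iSup]
    refine nu_sup12 ν hadd _ _ _ ?_ ?_
    · rw [Finset.sup_univ_eq_iSup, ← hgen s hs]; exact hne s hs
    · rintro y - hy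
      have hval := nu_prod12 ν hmul Finset.univ
        (fun i : Fin n => Isymb ((i : ℕ) + 1) ^ y.1 i) hy
      have hpow : ∀ i : Fin n, ν (Isymb ((i : ℕ) + 1) ^ y.1 i) =
          y.1 i * ν (Isymb ((i : ℕ) + 1)) := by
        intro i
        refine nu_pow12 ν hmul ?_
        intro hb
        refine hy ?_
        rw [← Ideal.zero_eq_bot] at hb ⊢
        exact Finset.prod_eq_zero (Finset.mem_univ i) hb
      rw [hval]
      simp only [hpow]
      have hsum : c * s ≤ ∑ i : Fin n, ((y.1 i : ℝ) * (ν (Isymb ((i : ℕ) + 1)) : ℝ)) := by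
        have := y.2
        calc c * s = ∑ i : Fin n, c * (((i : ℕ) + 1) * y.1 i : ℕ) := by
              rw [← Finset.mul_sum, ← Nat.cast_sum, this]
          _ ≤ ∑ i : Fin n, ((y.1 i : ℝ) * (ν (Isymb ((i : ℕ) + 1)) : ℝ)) := by
              refine Finset.sum_le_sum fun i _ => ?_
              have h1 := hcle i
              have h2 : (0:ℝ) < ((i : ℕ) + 1) := by positivity
              rw [le_div_iff₀ h2] at h1
              push_cast
              calc c * (((i : ℕ) + 1) * (y.1 i : ℝ))
                  = (c * ((i : ℕ) + 1)) * (y.1 i : ℝ) := by ring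
                _ ≤ (ν (Isymb ((i : ℕ) + 1)) : ℝ) * (y.1 i : ℝ) := by
                    exact mul_le_mul_of_nonneg_right h1 (Nat.cast_nonneg _)
                _ = (y.1 i : ℝ) * (ν (Isymb ((i : ℕ) + 1)) : ℝ) := by ring
      calc c * s ≤ ∑ i : Fin n, ((y.1 i : ℝ) * (ν (Isymb ((i : ℕ) + 1)) : ℝ)) := hsum
        _ = ((∑ i : Fin n, y.1 i * ν (Isymb ((i : ℕ) + 1)) : ℕ) : ℝ) := by push_cast; rfl
  -- bounded below
  have hbdd : BddBelow (Set.range fun m : ℕ => u m / m) := by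
    refine ⟨0, ?_⟩
    rintro x ⟨m, rfl⟩
    simp only [hu]
    positivity
  have htend := hsub.tendsto_lim hbdd
  have hlim : hsub.lim = c := by
    apply le_antisymm
    · obtain ⟨m, hm, hmeq⟩ := Finset.exists_mem_eq_inf' (Finset.nonempty_Icc.mpr hn)
        (fun m => (ν (Isymb m) : ℝ) / m)
      rw [hc, hmeq]
      have hm1 : m ≠ 0 := by
        have := (Finset.mem_Icc.mp hm).1; omega
      exact hsub.lim_le_div hbdd hm1
    · rw [Subadditive.lim]
      refine le_csInf ⟨u 1 / (1:ℕ), ⟨1, Set.self_mem_Ici, rfl⟩⟩ ?_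
      rintro x ⟨s, hs, rfl⟩
      have hs' : (1:ℕ) ≤ s := hs
      have hspos : (0:ℝ) < s := by exact_mod_cast Nat.lt_of_lt_of_le Nat.zero_lt_one hs'
      rw [le_div_iff₀ hspos]
      exact hlow s hs'
  rw [← hlim]
  exact htend
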